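/- Uniqueness with dense frequencies: let {ν_k}_{k=1}^∞ ⊂ (0,∞) be a sequence of frequencies such that {4ν_k : k ∈ ℕ} is dense in [0,∞). If μ ∈ L²([0,1]) satisfies T_{ν_k} μ = 0 for all k, i.e. ∫₀¹ cos²(2ν_k|x−y|) μ(y) dy = 0 for all x ∈ [0,1] and all k, then μ = 0 almost everywhere on [0,1]. -/

import Mathlib

open MeasureTheory Set Real

private lemma aux_trig (ν : ℕ → ℝ) (hν : ∀ k, 0 < ν k)
    (hdense : ∀ x : ℝ, 0 ≤ x → x ∈ closure (Set.range fun k : ℕ => 4 * ν k))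
    (μ : ℝ → ℝ) (hμ : MemLp μ 2 (volume.restrict (Set.Icc (0:ℝ) 1)))
    (h0 : ∀ k : ℕ, ∀ x ∈ Set.Icc (0:ℝ) 1,
      ∫ y in Set.Icc (0:ℝ) 1, (Real.cos (2 * ν k * |x - y|))^2 * μ y = 0) :
    ∀ t : ℝ, (∫ y in Set.Icc (0:ℝ) 1, Real.cos (t*y) * μ y = 0)
      ∧ (∫ y in Set.Icc (0:ℝ) 1, Real.sin (t*y) * μ y = 0) := by
  haveI : IsFiniteMeasure (volume.restrict (Set.Icc (0:ℝ) 1)) :=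
    ⟨by rw [Measure.restrict_apply_univ]; exact measure_Icc_lt_top⟩
  have hint : Integrable μ (volume.restrict (Set.Icc (0:ℝ) 1)) :=
    hμ.integrable (by norm_num)
  set m := volume.restrict (Set.Icc (0:ℝ) 1) with hm
  -- integrability of cos/sin multiples
  have hintc : ∀ f : ℝ → ℝ, (∀ y, |f y| ≤ 1) → Continuous f →
      Integrable (fun y => f y * μ y) m := by
    intro f hf hc
    exact hint.bdd_mul hc.aestronglyMeasurable (c := 1) (Filter.Eventually.of_forall fun y => by simpa using hf y)
  set C : ℝ → ℝ → ℝ := fun t x => ∫ y, Real.cos (t*(x-y)) * μ y ∂m with hC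
  set I : ℝ := ∫ y, μ y ∂m with hI
  have hCcont : ∀ x : ℝ, Continuous fun t => C t x := by
    intro x
    apply continuous_of_dominated (bound := fun y => |μ y|)
    · intro t
      exact (hintc (fun y => Real.cos (t*(x-y))) (fun y => Real.abs_cos_le_one _)
        (by fun_prop)).aestronglyMeasurable
    · intro t
      filter_upwards with y
      rw [Real.norm_eq_abs, abs_mul]
      exact mul_le_of_le_one_left (abs_nonneg _) (Real.abs_cos_le_one _)
    · exact hint.abs
    · filter_upwards with y
      fun_prop
  have hk : ∀ k : ℕ, ∀ x ∈ Set.Icc (0:ℝ) 1, I + C (4 * ν k) x = 0 := by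
    intro k x hx
    have hpt : ∀ y : ℝ, (Real.cos (2 * ν k * |x - y|))^2 * μ y
        = (1/2) * μ y + (1/2) * (Real.cos ((4 * ν k) * (x - y)) * μ y) := by
      intro y
      have h4 : (0:ℝ) ≤ 4 * ν k := by nlinarith [hν k]
      have : Real.cos (2 * (2 * ν k * |x - y|)) = Real.cos ((4 * ν k) * (x - y)) := by
        rw [show 2 * (2 * ν k * |x - y|) = (4 * ν k) * |x - y| by ring,
          ← Real.cos_abs ((4 * ν k) * (x - y)), abs_mul, abs_of_nonneg h4]
      rw [Real.cos_sq, add_mul, this]; ring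
    have h := h0 k x hx
    rw [show (∫ y in Set.Icc (0:ℝ) 1, (Real.cos (2 * ν k * |x - y|))^2 * μ y)
        = ∫ y, ((1/2) * μ y + (1/2) * (Real.cos ((4 * ν k) * (x - y)) * μ y)) ∂m from
      integral_congr_ae (Filter.Eventually.of_forall hpt)] at h
    rw [integral_add (hint.const_mul _) (((hintc (fun y => Real.cos ((4 * ν k) * (x-y)))
        (fun y => Real.abs_cos_le_one _) (by fun_prop))).const_mul _),
      integral_const_mul, integral_const_mul] at h
    have : (1/2) * I + (1/2) * C (4 * ν k) x = 0 := h
    linarith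
  -- by density, I + C t x = 0 for all t ≥ 0
  have hdc : ∀ x ∈ Set.Icc (0:ℝ) 1, ∀ t : ℝ, 0 ≤ t → I + C t x = 0 := by
    intro x hx t ht
    have hS : IsClosed {t : ℝ | I + C t x = 0} :=
      isClosed_eq (continuous_const.add (hCcont x)) continuous_const
    have hsub : closure (Set.range fun k : ℕ => 4 * ν k) ⊆ {t : ℝ | I + C t x = 0} := by
      apply closure_minimal _ hS
      rintro _ ⟨k, rfl⟩
      exact hk k x hx
    exact hsub (hdense t ht)
  -- I = 0
  have hI0 : I = 0 := by
    have h1 := hdc 0 (by simp) 0 le_rfl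
    have h2 : C 0 0 = I := by
      simp only [hC, hI]
      exact integral_congr_ae (Filter.Eventually.of_forall fun y => by simp)
    rw [h2] at h1; linarith
  -- C t x = 0 for all t and x ∈ Icc
  have hC0 : ∀ x ∈ Set.Icc (0:ℝ) 1, ∀ t : ℝ, C t x = 0 := by
    intro x hx t
    rcases le_or_gt 0 t with ht | ht
    · have := hdc x hx t ht; linarith
    · have hneg : C t x = C (-t) x := by
        simp only [hC]
        exact integral_congr_ae (Filter.Eventually.of_forall fun y => by
          show Real.cos (t*(x-y)) * μ y = Real.cos (-t*(x-y)) * μ y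
          rw [neg_mul, Real.cos_neg])
      have := hdc x hx (-t) (by linarith); rw [hneg]; linarith
  -- A t = 0
  have hA : ∀ t : ℝ, (∫ y, Real.cos (t*y) * μ y ∂m) = 0 := by
    intro t
    have h := hC0 0 (by simp) t
    rw [hC] at h
    rw [← h]
    exact integral_congr_ae (Filter.Eventually.of_forall fun y => by
      show Real.cos (t*y) * μ y = Real.cos (t*(0-y)) * μ y
      rw [zero_sub, mul_neg, Real.cos_neg])
  -- B t = 0
  have hB : ∀ t : ℝ, (∫ y, Real.sin (t*y) * μ y ∂m) = 0 := by
    intro t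
    rcases eq_or_ne t 0 with rfl | ht
    · simp
    · set x : ℝ := min 1 (π / (2 * |t|)) with hxdef
      have htpos : 0 < |t| := abs_pos.mpr ht
      have hxpos : 0 < x := lt_min one_pos (by positivity)
      have hxmem : x ∈ Set.Icc (0:ℝ) 1 := ⟨hxpos.le, min_le_left _ _⟩
      have hxle : |t| * x ≤ π / 2 := by
        have : x ≤ π / (2 * |t|) := min_le_right _ _
        calc |t| * x ≤ |t| * (π / (2 * |t|)) := by nlinarith
        _ = π / 2 := by field_simp
      have hsin : Real.sin (t * x) ≠ 0 := by
        intro hs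
        have habs : |t * x| ≤ π / 2 := by
          rw [abs_mul, abs_of_pos hxpos]; exact hxle
        obtain ⟨hl, hr⟩ := abs_le.mp habs
        have h1 : -π < t * x := by nlinarith [Real.pi_pos]
        have h2 : t * x < π := by nlinarith [Real.pi_pos]
        have := (Real.sin_eq_zero_iff_of_lt_of_lt h1 h2).mp hs
        exact (mul_ne_zero ht hxpos.ne') this
      have hexp : C t x = Real.cos (t*x) * (∫ y, Real.cos (t*y) * μ y ∂m)
          + Real.sin (t*x) * (∫ y, Real.sin (t*y) * μ y ∂m) := by
        simp only [hC]
        rw [show (∫ y, Real.cos (t*(x-y)) * μ y ∂m)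
            = ∫ y, (Real.cos (t*x) * (Real.cos (t*y) * μ y)
              + Real.sin (t*x) * (Real.sin (t*y) * μ y)) ∂m from
          integral_congr_ae (Filter.Eventually.of_forall fun y => by
            show Real.cos (t*(x-y)) * μ y = _
            rw [mul_sub, Real.cos_sub]; ring),
          integral_add ((hintc _ (fun y => Real.abs_cos_le_one _) (by fun_prop)).const_mul _)
            ((hintc _ (fun y => Real.abs_sin_le_one _) (by fun_prop)).const_mul _),
          integral_const_mul, integral_const_mul]
      have h := hC0 x hxmem t
      rw [hexp, hA t, mul_zero, zero_add] at h
      exact (mul_eq_zero.mp h).resolve_left hsin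
  exact fun t => ⟨hA t, hB t⟩

private lemma key_fourier (μ : ℝ → ℝ) (hm : Measurable μ)
    (hμ : MemLp μ 2 (volume.restrict (Set.Icc (0:ℝ) 1)))
    (hA : ∀ t : ℝ, ∫ y in Set.Icc (0:ℝ) 1, Real.cos (t*y) * μ y = 0)
    (hB : ∀ t : ℝ, ∫ y in Set.Icc (0:ℝ) 1, Real.sin (t*y) * μ y = 0) :
    ∀ᵐ y ∂(volume.restrict (Set.Icc (0:ℝ) 1)), μ y = 0 := by
  haveI : Fact ((0:ℝ) < 1) := ⟨zero_lt_one⟩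
  haveI : IsFiniteMeasure (volume.restrict (Set.Icc (0:ℝ) 1)) :=
    ⟨by rw [Measure.restrict_apply_univ]; exact measure_Icc_lt_top⟩
  have hint : Integrable μ (volume.restrict (Set.Icc (0:ℝ) 1)) := hμ.integrable (by norm_num)
  have hintc : ∀ f : ℝ → ℝ, Continuous f → (∀ y, |f y| ≤ 1) →
      Integrable (fun y => f y * μ y) (volume.restrict (Set.Icc (0:ℝ) 1)) := fun f hc hf =>
    hint.bdd_mul hc.aestronglyMeasurable (c := 1) (Filter.Eventually.of_forall fun y => by simpa using hf y)
  set g : ℝ → ℂ := fun y => (μ y : ℂ) with hg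
  -- restriction measures agree a.e.
  have hresteq : volume.restrict (Set.Ioc (0:ℝ) (0+1)) = volume.restrict (Set.Icc (0:ℝ) 1) := by
    rw [zero_add]; exact Measure.restrict_congr_set Ioc_ae_eq_Icc
  -- Step 1: all Fourier coefficients of g on [0,1] vanish
  have hcoeff : ∀ n : ℤ, fourierCoeffOn (by norm_num : (0:ℝ) < 0+1) g n = 0 := by
    intro n
    rw [fourierCoeffOn_eq_integral]
    have hptw : ∀ x : ℝ, (fourier (-n) (x : AddCircle ((0:ℝ)+1-0))) • g x
        = ((Real.cos ((2*π*(-n:ℝ))*x) * μ x : ℝ) : ℂ)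
          + ((Real.sin ((2*π*(-n:ℝ))*x) * μ x : ℝ) : ℂ) * Complex.I := by
      intro x
      rw [fourier_coe_apply]
      have harg : 2 * ↑π * Complex.I * ↑(-n : ℤ) * ↑x / ↑((0:ℝ)+1-0)
          = ((2*π*(-n:ℝ)*x : ℝ) : ℂ) * Complex.I := by
        push_cast; field_simp; ring
      rw [harg, Complex.exp_mul_I, smul_eq_mul]
      push_cast
      simp only [hg]
      ring
    rw [intervalIntegral.integral_of_le (by norm_num : (0:ℝ) ≤ 0+1)]
    rw [show (∫ x in Set.Ioc (0:ℝ) (0+1), (fourier (-n) (x : AddCircle ((0:ℝ)+1-0))) • g x)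
        = ∫ x in Set.Ioc (0:ℝ) (0+1), (((Real.cos ((2*π*(-n:ℝ))*x) * μ x : ℝ) : ℂ)
          + ((Real.sin ((2*π*(-n:ℝ))*x) * μ x : ℝ) : ℂ) * Complex.I) from
      integral_congr_ae (Filter.Eventually.of_forall fun x => hptw x)]
    rw [hresteq]
    have h1 : Integrable (fun x => ((Real.cos ((2*π*(-n:ℝ))*x) * μ x : ℝ) : ℂ))
        (volume.restrict (Set.Icc (0:ℝ) 1)) :=
      (hintc (fun y => Real.cos ((2*π*(-n:ℝ))*y)) (by fun_prop)
        (fun y => Real.abs_cos_le_one _)).ofReal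
    have h2 : Integrable (fun x => ((Real.sin ((2*π*(-n:ℝ))*x) * μ x : ℝ) : ℂ) * Complex.I)
        (volume.restrict (Set.Icc (0:ℝ) 1)) :=
      ((hintc (fun y => Real.sin ((2*π*(-n:ℝ))*y)) (by fun_prop)
        (fun y => Real.abs_sin_le_one _)).ofReal).mul_const Complex.I
    have e1 : (∫ x in Set.Icc (0:ℝ) 1, ((Real.cos ((2*π*(-n:ℝ))*x) * μ x : ℝ) : ℂ))
        = (((∫ x in Set.Icc (0:ℝ) 1, Real.cos ((2*π*(-n:ℝ))*x) * μ x) : ℝ) : ℂ) :=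
      integral_ofReal
    have e2 : (∫ x in Set.Icc (0:ℝ) 1, ((Real.sin ((2*π*(-n:ℝ))*x) * μ x : ℝ) : ℂ))
        = (((∫ x in Set.Icc (0:ℝ) 1, Real.sin ((2*π*(-n:ℝ))*x) * μ x) : ℝ) : ℂ) :=
      integral_ofReal
    rw [integral_add h1 h2, integral_mul_const, e1, e2, hA, hB]
    simp
  -- the lift of g to the additive circle
  set F : AddCircle (1:ℝ) → ℂ := AddCircle.liftIoc 1 0 g with hF
  have hmp := AddCircle.measurePreserving_mk (T := (1:ℝ)) 0
  have hFmeas : Measurable F := by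
    have h1 : Measurable (AddCircle.equivIoc (1:ℝ) 0) :=
      (AddCircle.measurableEquivIoc (T := (1:ℝ)) 0).measurable
    have h2 : Measurable ((Set.Ioc (0:ℝ) (0+1)).restrict g) :=
      (Complex.measurable_ofReal.comp hm).comp measurable_subtype_coe
    exact h2.comp h1
  have hgIoc : MemLp g 2 (volume.restrict (Set.Ioc (0:ℝ) (0+1))) := by
    rw [hresteq]; exact hμ.ofReal
  have hcompeq : g =ᵐ[volume.restrict (Set.Ioc (0:ℝ) (0+1))]
      (F ∘ (QuotientAddGroup.mk : ℝ → AddCircle (1:ℝ))) := by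
    filter_upwards [ae_restrict_mem measurableSet_Ioc] with x hx
    exact (AddCircle.liftIoc_coe_apply hx).symm
  have hcomp : MemLp (F ∘ (QuotientAddGroup.mk : ℝ → AddCircle (1:ℝ))) 2
      (volume.restrict (Set.Ioc (0:ℝ) (0+1))) := hgIoc.ae_eq hcompeq
  have hFvol : MemLp F 2 (volume : Measure (AddCircle (1:ℝ))) := by
    rw [← hmp.map_eq]
    refine (memLp_map_measure_iff ?_ hmp.measurable.aemeasurable).2 hcomp
    rw [hmp.map_eq]
    exact hFmeas.aestronglyMeasurable
  have hvol : (volume : Measure (AddCircle (1:ℝ))) = AddCircle.haarAddCircle := by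
    rw [AddCircle.volume_eq_smul_haarAddCircle]
    norm_num
  have hFhaar : MemLp F 2 (AddCircle.haarAddCircle (T := 1)) := hvol ▸ hFvol
  -- all Fourier coefficients of the Lp representative vanish
  set FLp := hFhaar.toLp F with hFLp
  have hrepr : (fourierBasis (T := 1)).repr FLp = 0 := by
    apply lp.ext
    funext i
    have hcongr : fourierCoeff (FLp : AddCircle (1:ℝ) → ℂ) i
        = fourierCoeff F i := by
      unfold fourierCoeff
      refine integral_congr_ae ?_
      filter_upwards [hFhaar.coeFn_toLp] with t ht
      rw [ht]
    have hliftc : fourierCoeff F i = 0 := by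
      rw [hF, fourierCoeff_liftIoc_eq]
      exact hcoeff i
    rw [fourierBasis_repr]
    simp only [hcongr, hliftc]
    rfl
  have hFLp0 : FLp = 0 := (fourierBasis (T := 1)).repr.map_eq_zero_iff.mp hrepr
  have hFae : F =ᵐ[(volume : Measure (AddCircle (1:ℝ)))] 0 := by
    rw [hvol]
    refine (hFhaar.coeFn_toLp).symm.trans ?_
    have : (FLp : AddCircle (1:ℝ) → ℂ) = ((0 : Lp ℂ 2 (AddCircle.haarAddCircle (T := 1))) :
        AddCircle (1:ℝ) → ℂ) := by rw [hFLp0]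
    rw [this]
    exact Lp.coeFn_zero _ _ _
  -- pull back along the quotient map
  have hpull : (F ∘ (QuotientAddGroup.mk : ℝ → AddCircle (1:ℝ)))
      =ᵐ[volume.restrict (Set.Ioc (0:ℝ) (0+1))] 0 := by
    have := hmp.quasiMeasurePreserving.ae_eq_comp hFae
    simpa using this
  have hg0 : g =ᵐ[volume.restrict (Set.Ioc (0:ℝ) (0+1))] 0 := hcompeq.trans hpull
  rw [← hresteq]
  filter_upwards [hg0] with y hy
  have : (μ y : ℂ) = 0 := hy
  exact_mod_cast this


/-- Uniqueness with dense frequencies: if `{4ν_k}` is dense in `[0,∞)` and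
`μ ∈ L²([0,1])` satisfies `T_{ν_k} μ = 0` for all `k`, then `μ = 0` a.e. on `[0,1]`. -/
theorem uniqueness_with_dense_frequencies (ν : ℕ → ℝ) (hν : ∀ k, 0 < ν k)
    (hdense : ∀ x : ℝ, 0 ≤ x → x ∈ closure (Set.range fun k : ℕ => 4 * ν k))
    (μ : ℝ → ℝ) (hμ : MemLp μ 2 (volume.restrict (Set.Icc (0:ℝ) 1)))
    (h0 : ∀ k : ℕ, ∀ x ∈ Set.Icc (0:ℝ) 1,
      ∫ y in Set.Icc (0:ℝ) 1, (Real.cos (2 * ν k * |x - y|))^2 * μ y = 0) :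
    ∀ᵐ y ∂(volume.restrict (Set.Icc (0:ℝ) 1)), μ y = 0 := by
  have hAB := aux_trig ν hν hdense μ hμ h0
  -- replace μ by a measurable representative
  set μ₀ : ℝ → ℝ := hμ.aestronglyMeasurable.mk μ with hμ₀def
  have h_eq : μ =ᵐ[volume.restrict (Set.Icc (0:ℝ) 1)] μ₀ :=
    hμ.aestronglyMeasurable.ae_eq_mk
  have hμ₀ : MemLp μ₀ 2 (volume.restrict (Set.Icc (0:ℝ) 1)) := hμ.ae_eq h_eq
  have hm₀ : Measurable μ₀ :=
    hμ.aestronglyMeasurable.stronglyMeasurable_mk.measurable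
  have hA₀ : ∀ t : ℝ, ∫ y in Set.Icc (0:ℝ) 1, Real.cos (t*y) * μ₀ y = 0 := by
    intro t
    refine Eq.trans (integral_congr_ae (h_eq.mono fun y hy => ?_)) (hAB t).1
    show Real.cos (t*y) * μ₀ y = Real.cos (t*y) * μ y
    rw [hy]
  have hB₀ : ∀ t : ℝ, ∫ y in Set.Icc (0:ℝ) 1, Real.sin (t*y) * μ₀ y = 0 := by
    intro t
    refine Eq.trans (integral_congr_ae (h_eq.mono fun y hy => ?_)) (hAB t).2
    show Real.sin (t*y) * μ₀ y = Real.sin (t*y) * μ y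
    rw [hy]
  have h₀ := key_fourier μ₀ hm₀ hμ₀ hA₀ hB₀
  filter_upwards [h_eq, h₀] with y hy hy0
  rw [hy, hy0]
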